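/- Let 0 < β₁ < 1 and 0 < φ < 2β₁ + 2. Then every complex root λ of the quadratic λ² − (1 + β₁ − φ)λ + β₁ = 0 satisfies |λ| < 1. Moreover, if (1 + β₁ − φ)² − 4β₁ < 0 (complex conjugate roots), then |λ| = √β₁. -/

import Mathlib

/-- Every complex root `λ` of the quadratic `λ² − (1 + β₁ − φ)λ + β₁ = 0` with
`0 < β₁ < 1` and `0 < φ < 2β₁ + 2` satisfies `|λ| < 1`; moreover, in the complex
conjugate case `(1 + β₁ − φ)² − 4β₁ < 0` one has `|λ| = √β₁`. -/
theorem stmt3 (β₁ φ : ℝ) (hβ₁0 : 0 < β₁) (hβ₁1 : β₁ < 1)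
    (hφ0 : 0 < φ) (hφ : φ < 2 * β₁ + 2) :
    ∀ lam : ℂ, lam ^ 2 - ((1 + β₁ - φ : ℝ) : ℂ) * lam + ((β₁ : ℝ) : ℂ) = 0 →
      ‖lam‖ < 1 ∧
      ((1 + β₁ - φ) ^ 2 - 4 * β₁ < 0 → ‖lam‖ = Real.sqrt β₁) := by
  intro lam heq
  set b : ℝ := 1 + β₁ - φ with hb
  set x : ℝ := lam.re with hx
  set y : ℝ := lam.im with hy
  have h1 : x ^ 2 - y ^ 2 - b * x + β₁ = 0 := by
    have := congrArg Complex.re heq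
    simpa [pow_two, Complex.mul_re, Complex.mul_im, hx, hy, mul_comm] using this
  have h2 : y * (2 * x - b) = 0 := by
    have := congrArg Complex.im heq
    simp [pow_two, Complex.mul_re, Complex.mul_im, hx, hy] at this
    nlinarith [this]
  have habs2 : ‖lam‖ ^ 2 = x ^ 2 + y ^ 2 := by
    rw [Complex.sq_norm, Complex.normSq_apply]; ring
  have hbub : b < 1 + β₁ := by simp [hb]; linarith
  have hblb : -(1 + β₁) < b := by simp [hb]; linarith
  rcases lt_or_ge (b ^ 2 - 4 * β₁) 0 with hD | hD
  · -- complex conjugate case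
    have hy0 : y ≠ 0 := by
      intro hy0
      rw [hy0] at h1
      nlinarith [sq_nonneg (2 * x - b)]
    have hx2 : 2 * x = b := by
      rcases mul_eq_zero.1 h2 with h | h
      · exact absurd h hy0
      · linarith
    have hsum : x ^ 2 + y ^ 2 = β₁ := by nlinarith
    have habs : ‖lam‖ = Real.sqrt β₁ := by
      rw [show β₁ = ‖lam‖ ^ 2 by rw [habs2, hsum],
        Real.sqrt_sq (norm_nonneg lam)]
    constructor
    · rw [habs]
      have := Real.sqrt_lt_sqrt hβ₁0.le hβ₁1
      simpa using this
    · intro _; exact habs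
  · -- real roots case
    have hy0 : y = 0 := by
      rcases mul_eq_zero.1 h2 with h | h
      · exact h
      · have hx2 : 2 * x = b := by linarith
        nlinarith
    rw [hy0] at h1 habs2
    have hx1 : x < 1 := by nlinarith
    have hx1' : -1 < x := by nlinarith
    constructor
    · nlinarith [norm_nonneg lam]
    · intro hcon; exact absurd hcon (not_lt.2 hD)
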